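/- arXiv:2605.04246 — 2 statements merged into one kernel-verified Lean document; each statement's English description precedes it below -/
import Mathlib

section
/- Let π₁, π₂ be finite nonnegative measures on ℝ^d with common mass c > 0 whose normalizations have means m₁, m₂ and positive definite covariances Σ₁, Σ₂. Then for every nonnegative coupling π on ℝ^d×ℝ^d with marginals π₁ and π₂, ∫∫ ‖x₂−x₁‖² dπ(x₁,x₂) ≥ c·(‖m₂−m₁‖² + tr(Σ₁ + Σ₂ − 2(Σ₁^{1/2} Σ₂ Σ₁^{1/2})^{1/2})). -/
open MeasureTheory Matrix Real

private lemma l2_mul_int {α : Type*} [MeasurableSpace α] {μ : Measure α} {f g : α → ℝ}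
    (hf : MemLp f 2 μ) (hg : MemLp g 2 μ) : Integrable (fun x => f x * g x) μ := by
  rw [← memLp_one_iff_integrable]
  haveI : ENNReal.HolderTriple 2 2 1 := ⟨by rw [ENNReal.inv_two_add_inv_two, inv_one]⟩
  exact hg.smul hf

private lemma integral_comb {α : Type*} [MeasurableSpace α] {μ : Measure α}
    {f g f' g' : α → ℝ} (hf : MemLp f 2 μ) (hg : MemLp g 2 μ)
    (hf' : MemLp f' 2 μ) (hg' : MemLp g' 2 μ) (p q p' q' : ℝ) :
    ∫ x, (p * f x - q * g x) * (p' * f' x - q' * g' x) ∂μ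
      = p * p' * ∫ x, f x * f' x ∂μ - p * q' * ∫ x, f x * g' x ∂μ
        - q * p' * ∫ x, g x * f' x ∂μ + q * q' * ∫ x, g x * g' x ∂μ := by
  have h1 := l2_mul_int hf hf'
  have h2 := l2_mul_int hf hg'
  have h3 := l2_mul_int hg hf'
  have h4 := l2_mul_int hg hg'
  have key : (fun x => (p * f x - q * g x) * (p' * f' x - q' * g' x))
      = fun x => p * p' * (f x * f' x) - p * q' * (f x * g' x)
          - q * p' * (g x * f' x) + q * q' * (g x * g' x) := funext fun x => by ring
  have hc1 : Integrable (fun x => p * p' * (f x * f' x)) μ := h1.const_mul _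
  have hc2 : Integrable (fun x => p * q' * (f x * g' x)) μ := h2.const_mul _
  have hc3 : Integrable (fun x => q * p' * (g x * f' x)) μ := h3.const_mul _
  have hc4 : Integrable (fun x => q * q' * (g x * g' x)) μ := h4.const_mul _
  have hA : Integrable (fun x => p * p' * (f x * f' x) - p * q' * (f x * g' x)) μ :=
    hc1.sub hc2
  have hB : Integrable (fun x => p * p' * (f x * f' x) - p * q' * (f x * g' x)
      - q * p' * (g x * f' x)) μ := hA.sub hc3
  rw [key, integral_add hB hc4, integral_sub hA hc3, integral_sub hc1 hc2,
    integral_const_mul, integral_const_mul, integral_const_mul, integral_const_mul]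

private lemma sum_four {n : ℕ} (A B C D : Fin n → ℝ) :
    ∑ i, (A i - B i - C i + D i)
      = (∑ i, A i) - (∑ i, B i) - (∑ i, C i) + ∑ i, D i := by
  rw [Finset.sum_add_distrib, Finset.sum_sub_distrib, Finset.sum_sub_distrib]

/-- Gelbrich lower bound: for finite nonnegative measures `π₁, π₂` of common mass `c > 0`
whose normalizations have means `m₁, m₂` and positive definite covariances `Σ₁, Σ₂`, every
coupling `π` with marginals `π₁, π₂` satisfies
`∫∫ ‖x₂−x₁‖² dπ ≥ c (‖m₂−m₁‖² + tr(Σ₁ + Σ₂ − 2(Σ₁^{1/2} Σ₂ Σ₁^{1/2})^{1/2}))`.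
Here `R` is the square root of `Σ₁` and `G` that of `Σ₁^{1/2} Σ₂ Σ₁^{1/2}`. -/
theorem gelbrich_lower_bound {d : ℕ}
    (pi1 pi2 : Measure (Fin d → ℝ)) [IsFiniteMeasure pi1] [IsFiniteMeasure pi2]
    (cpl : Measure ((Fin d → ℝ) × (Fin d → ℝ)))
    (c : ℝ) (hc : 0 < c)
    (m1 m2 : Fin d → ℝ) (S1 S2 : Matrix (Fin d) (Fin d) ℝ)
    (hS1 : S1.PosDef) (hS2 : S2.PosDef)
    (hmass1 : pi1 Set.univ = ENNReal.ofReal c)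
    (hmass2 : pi2 Set.univ = ENNReal.ofReal c)
    (hsq1 : ∀ i, Integrable (fun x : Fin d → ℝ => (x i) ^ 2) pi1)
    (hsq2 : ∀ i, Integrable (fun x : Fin d → ℝ => (x i) ^ 2) pi2)
    (hmean1 : ∀ i, ∫ x, x i ∂pi1 = c * m1 i)
    (hmean2 : ∀ i, ∫ x, x i ∂pi2 = c * m2 i)
    (hcov1 : ∀ i j, ∫ x, (x i - m1 i) * (x j - m1 j) ∂pi1 = c * S1 i j)
    (hcov2 : ∀ i j, ∫ x, (x i - m2 i) * (x j - m2 j) ∂pi2 = c * S2 i j)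
    (hmarg1 : cpl.map Prod.fst = pi1)
    (hmarg2 : cpl.map Prod.snd = pi2)
    (R G : Matrix (Fin d) (Fin d) ℝ)
    (hR : R.PosSemidef) (hRR : R * R = S1)
    (hG : G.PosSemidef) (hGG : G * G = R * S2 * R) :
    ENNReal.ofReal
        (c * ((∑ i, (m2 i - m1 i) ^ 2) + (S1 + S2 - (2 : ℝ) • G).trace))
      ≤ ∫⁻ z, ENNReal.ofReal (∑ i, (z.2 i - z.1 i) ^ 2) ∂cpl := by
  -- measure-theoretic setup
  have hcpl_univ : cpl Set.univ = ENNReal.ofReal c := by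
    rw [← hmass1, ← hmarg1, Measure.map_apply measurable_fst MeasurableSet.univ]
    rfl
  haveI : IsFiniteMeasure cpl := ⟨by rw [hcpl_univ]; exact ENNReal.ofReal_lt_top⟩
  have hmassR : (cpl Set.univ).toReal = c := by
    rw [hcpl_univ, ENNReal.toReal_ofReal hc.le]
  have hA2 : ∀ i, MemLp (fun z : (Fin d → ℝ) × (Fin d → ℝ) => z.1 i) 2 cpl := by
    intro i
    have h1 : MemLp (fun x : Fin d → ℝ => x i) 2 pi1 :=
      (memLp_two_iff_integrable_sq (measurable_pi_apply i).aestronglyMeasurable).2 (hsq1 i)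
    rw [← hmarg1] at h1
    exact (memLp_map_measure_iff ((measurable_pi_apply i).aestronglyMeasurable)
      measurable_fst.aemeasurable).1 h1
  have hB2 : ∀ i, MemLp (fun z : (Fin d → ℝ) × (Fin d → ℝ) => z.2 i) 2 cpl := by
    intro i
    have h1 : MemLp (fun x : Fin d → ℝ => x i) 2 pi2 :=
      (memLp_two_iff_integrable_sq (measurable_pi_apply i).aestronglyMeasurable).2 (hsq2 i)
    rw [← hmarg2] at h1
    exact (memLp_map_measure_iff ((measurable_pi_apply i).aestronglyMeasurable)
      measurable_snd.aemeasurable).1 h1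
  have ha2 : ∀ i, MemLp (fun z : (Fin d → ℝ) × (Fin d → ℝ) => z.1 i - m1 i) 2 cpl :=
    fun i => (hA2 i).sub (memLp_const _)
  have hb2 : ∀ i, MemLp (fun z : (Fin d → ℝ) × (Fin d → ℝ) => z.2 i - m2 i) 2 cpl :=
    fun i => (hB2 i).sub (memLp_const _)
  have hmap1 : ∀ (f : (Fin d → ℝ) → ℝ), Measurable f →
      ∫ z : (Fin d → ℝ) × (Fin d → ℝ), f z.1 ∂cpl = ∫ x, f x ∂pi1 := by
    intro f hf
    rw [← hmarg1, integral_map measurable_fst.aemeasurable hf.aestronglyMeasurable]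
  have hmap2 : ∀ (f : (Fin d → ℝ) → ℝ), Measurable f →
      ∫ z : (Fin d → ℝ) × (Fin d → ℝ), f z.2 ∂cpl = ∫ x, f x ∂pi2 := by
    intro f hf
    rw [← hmarg2, integral_map measurable_snd.aemeasurable hf.aestronglyMeasurable]
  -- integral values
  have IAA : ∀ i j, ∫ z : (Fin d → ℝ) × (Fin d → ℝ),
      (z.1 i - m1 i) * (z.1 j - m1 j) ∂cpl = c * S1 i j := by
    intro i j
    exact (hmap1 (fun x => (x i - m1 i) * (x j - m1 j))
      (((measurable_pi_apply i).sub measurable_const).mul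
        ((measurable_pi_apply j).sub measurable_const))).trans (hcov1 i j)
  have IBB : ∀ i j, ∫ z : (Fin d → ℝ) × (Fin d → ℝ),
      (z.2 i - m2 i) * (z.2 j - m2 j) ∂cpl = c * S2 i j := by
    intro i j
    exact (hmap2 (fun x => (x i - m2 i) * (x j - m2 j))
      (((measurable_pi_apply i).sub measurable_const).mul
        ((measurable_pi_apply j).sub measurable_const))).trans (hcov2 i j)
  have IA : ∀ i, ∫ z : (Fin d → ℝ) × (Fin d → ℝ), (z.1 i - m1 i) ∂cpl = 0 := by
    intro i
    have e1 : ∫ z : (Fin d → ℝ) × (Fin d → ℝ), z.1 i ∂cpl = c * m1 i :=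
      (hmap1 (fun x => x i) (measurable_pi_apply i)).trans (hmean1 i)
    rw [integral_sub ((hA2 i).integrable one_le_two) (integrable_const _), e1,
      integral_const, measureReal_def, hmassR, smul_eq_mul, sub_self]
  have IB : ∀ i, ∫ z : (Fin d → ℝ) × (Fin d → ℝ), (z.2 i - m2 i) ∂cpl = 0 := by
    intro i
    have e1 : ∫ z : (Fin d → ℝ) × (Fin d → ℝ), z.2 i ∂cpl = c * m2 i :=
      (hmap2 (fun x => x i) (measurable_pi_apply i)).trans (hmean2 i)
    rw [integral_sub ((hB2 i).integrable one_le_two) (integrable_const _), e1,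
      integral_const, measureReal_def, hmassR, smul_eq_mul, sub_self]
  set T : Fin d → Fin d → ℝ :=
    fun i j => ∫ z : (Fin d → ℝ) × (Fin d → ℝ), (z.1 i - m1 i) * (z.2 j - m2 j) ∂cpl with hT
  have IBA : ∀ j k, ∫ z : (Fin d → ℝ) × (Fin d → ℝ),
      (z.2 j - m2 j) * (z.1 k - m1 k) ∂cpl = T k j := by
    intro j k
    have e : (fun z : (Fin d → ℝ) × (Fin d → ℝ) => (z.2 j - m2 j) * (z.1 k - m1 k))
        = fun z => (z.1 k - m1 k) * (z.2 j - m2 j) := funext fun z => mul_comm _ _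
    rw [e, hT]
  -- matrix setup
  have hRt : Rᵀ = R := by rw [← R.conjTranspose_eq_transpose_of_trivial, hR.1]
  have hdR : IsUnit R.det := by
    have h1 : 0 < S1.det := hS1.det_pos
    rw [← hRR, Matrix.det_mul] at h1
    exact isUnit_iff_ne_zero.2 fun h => by simp [h] at h1
  have hdG : IsUnit G.det := by
    have h1 : 0 < S2.det := hS2.det_pos
    have h2 : G.det * G.det = R.det * S2.det * R.det := by
      rw [← Matrix.det_mul, hGG, Matrix.det_mul, Matrix.det_mul]
    refine isUnit_iff_ne_zero.2 fun h => ?_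
    rw [h, mul_zero] at h2
    have h3 := hdR.ne_zero
    have h4 : R.det * S2.det * R.det ≠ 0 := by
      intro h5
      rcases mul_eq_zero.1 h5 with h6 | h6
      · rcases mul_eq_zero.1 h6 with h7 | h7
        · exact h3 h7
        · exact h1.ne' h7
      · exact h3 h6
    exact h4 h2.symm
  set X := R⁻¹ * G * R⁻¹ with hX
  have hRinvT : (R⁻¹)ᵀ = R⁻¹ := by rw [Matrix.transpose_nonsing_inv, hRt]
  have hXpsd : X.PosSemidef := by
    have := hG.conjTranspose_mul_mul_same R⁻¹
    rwa [Matrix.conjTranspose_eq_transpose_of_trivial, hRinvT] at this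
  have hXinv : X⁻¹ = R * G⁻¹ * R := by
    apply Matrix.inv_eq_right_inv
    calc R⁻¹ * G * R⁻¹ * (R * G⁻¹ * R)
        = R⁻¹ * (G * ((R⁻¹ * R) * G⁻¹)) * R := by
          simp only [Matrix.mul_assoc]
      _ = 1 := by rw [Matrix.nonsing_inv_mul _ hdR, one_mul,
            Matrix.mul_nonsing_inv _ hdG, mul_one, Matrix.nonsing_inv_mul _ hdR]
  obtain ⟨Y, hY2, hYpsd⟩ : ∃ Y : Matrix (Fin d) (Fin d) ℝ, Y * Y = X ∧ Y.PosSemidef := by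
    open scoped MatrixOrder in
    exact ⟨CFC.sqrt X, CFC.sqrt_mul_sqrt_self X hXpsd.nonneg, (CFC.sqrt_nonneg X).posSemidef⟩
  have hYt : Yᵀ = Y := by rw [← Y.conjTranspose_eq_transpose_of_trivial, hYpsd.1]
  have hdX : IsUnit X.det := by
    rw [hX, Matrix.det_mul, Matrix.det_mul, Matrix.det_nonsing_inv,
      Ring.inverse_eq_inv]
    exact (hdR.inv.mul hdG).mul hdR.inv
  have hdY : IsUnit Y.det := by
    have h : Y.det * Y.det = X.det := by rw [← Matrix.det_mul, hY2]
    exact isUnit_iff_ne_zero.2 fun hy => hdX.ne_zero (by rw [← h, hy, mul_zero])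
  have hYinvT : (Y⁻¹)ᵀ = Y⁻¹ := by rw [Matrix.transpose_nonsing_inv, hYt]
  have hWW2 : Y⁻¹ * Y⁻¹ = X⁻¹ := by rw [← Matrix.mul_inv_rev, hY2]
  have hYY : ∀ j k, ∑ i, Y i j * Y i k = X j k := by
    intro j k
    have h : (Yᵀ * Y) j k = ∑ i, Y i j * Y i k := by
      simp [Matrix.mul_apply, Matrix.transpose_apply]
    rw [← h, hYt, hY2]
  have hYW : ∀ j k, ∑ i, Y i j * Y⁻¹ i k = (1 : Matrix (Fin d) (Fin d) ℝ) j k := by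
    intro j k
    have h : (Yᵀ * Y⁻¹) j k = ∑ i, Y i j * Y⁻¹ i k := by
      simp [Matrix.mul_apply, Matrix.transpose_apply]
    rw [← h, hYt, Matrix.mul_nonsing_inv _ hdY]
  have hWY : ∀ j k, ∑ i, Y⁻¹ i j * Y i k = (1 : Matrix (Fin d) (Fin d) ℝ) j k := by
    intro j k
    have h : ((Y⁻¹)ᵀ * Y) j k = ∑ i, Y⁻¹ i j * Y i k := by
      simp [Matrix.mul_apply, Matrix.transpose_apply]
    rw [← h, hYinvT, Matrix.nonsing_inv_mul _ hdY]
  have hWW : ∀ j k, ∑ i, Y⁻¹ i j * Y⁻¹ i k = X⁻¹ j k := by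
    intro j k
    have h : ((Y⁻¹)ᵀ * Y⁻¹) j k = ∑ i, Y⁻¹ i j * Y⁻¹ i k := by
      simp [Matrix.mul_apply, Matrix.transpose_apply]
    rw [← h, hYinvT, hWW2]
  have sum_entry : ∀ M N : Matrix (Fin d) (Fin d) ℝ,
      ∑ j, ∑ k, M j k * N j k = (Mᵀ * N).trace := by
    intro M N
    simp only [Matrix.trace, Matrix.diag, Matrix.mul_apply, Matrix.transpose_apply]
    rw [Finset.sum_comm]
  have hXt : Xᵀ = X := by rw [← X.conjTranspose_eq_transpose_of_trivial, hXpsd.1]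
  have hXinvT : (X⁻¹)ᵀ = X⁻¹ := by rw [Matrix.transpose_nonsing_inv, hXt]
  have trace1 : ∑ j, ∑ k, X j k * S1 j k = G.trace := by
    rw [sum_entry, hXt, hX, ← hRR]
    calc (R⁻¹ * G * R⁻¹ * (R * R)).trace
        = (R⁻¹ * (G * R)).trace := by
          rw [Matrix.mul_assoc (R⁻¹ * G) R⁻¹ (R * R), ← Matrix.mul_assoc R⁻¹ R R,
            Matrix.nonsing_inv_mul _ hdR, one_mul, Matrix.mul_assoc]
      _ = (G * (R * R⁻¹)).trace := by
          rw [Matrix.trace_mul_comm, Matrix.mul_assoc]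
      _ = G.trace := by rw [Matrix.mul_nonsing_inv _ hdR, mul_one]
  have trace2 : ∑ j, ∑ k, X⁻¹ j k * S2 j k = G.trace := by
    rw [sum_entry, hXinvT, hXinv]
    calc (R * G⁻¹ * R * S2).trace
        = (R * G⁻¹ * (R * S2)).trace := by rw [Matrix.mul_assoc (R * G⁻¹) R S2]
      _ = ((R * S2) * (R * G⁻¹)).trace := Matrix.trace_mul_comm _ _
      _ = (R * S2 * R * G⁻¹).trace := by rw [Matrix.mul_assoc (R * S2) R G⁻¹]
      _ = (G⁻¹ * (R * S2 * R)).trace := Matrix.trace_mul_comm _ _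
      _ = G.trace := by
          rw [← hGG, ← Matrix.mul_assoc, Matrix.nonsing_inv_mul _ hdG, one_mul]
  -- the core positivity argument
  have hcomb2 : ∀ i j, MemLp (fun z : (Fin d → ℝ) × (Fin d → ℝ) =>
      Y i j * (z.1 j - m1 j) - Y⁻¹ i j * (z.2 j - m2 j)) 2 cpl :=
    fun i j => ((ha2 j).const_mul _).sub ((hb2 j).const_mul _)
  have hP2 : ∀ i, MemLp (fun z : (Fin d → ℝ) × (Fin d → ℝ) =>
      ∑ j, (Y i j * (z.1 j - m1 j) - Y⁻¹ i j * (z.2 j - m2 j))) 2 cpl :=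
    fun i => memLp_finset_sum _ fun j _ => hcomb2 i j
  have hnn : (0:ℝ) ≤ ∫ z : (Fin d → ℝ) × (Fin d → ℝ),
      ∑ i, (∑ j, (Y i j * (z.1 j - m1 j) - Y⁻¹ i j * (z.2 j - m2 j)))^2 ∂cpl :=
    integral_nonneg fun z => Finset.sum_nonneg fun i _ => sq_nonneg _
  have hPi : ∀ i, ∫ z : (Fin d → ℝ) × (Fin d → ℝ),
      (∑ j, (Y i j * (z.1 j - m1 j) - Y⁻¹ i j * (z.2 j - m2 j)))^2 ∂cpl
      = ∑ j, ∑ k, (Y i j * Y i k * (c * S1 j k) - Y i j * Y⁻¹ i k * T j k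
          - Y⁻¹ i j * Y i k * T k j + Y⁻¹ i j * Y⁻¹ i k * (c * S2 j k)) := by
    intro i
    have e1 : (fun z : (Fin d → ℝ) × (Fin d → ℝ) =>
        (∑ j, (Y i j * (z.1 j - m1 j) - Y⁻¹ i j * (z.2 j - m2 j)))^2)
        = fun z => ∑ j, ∑ k, ((Y i j * (z.1 j - m1 j) - Y⁻¹ i j * (z.2 j - m2 j))
            * (Y i k * (z.1 k - m1 k) - Y⁻¹ i k * (z.2 k - m2 k))) :=
      funext fun z => by rw [pow_two, Finset.sum_mul_sum]
    rw [e1, integral_finset_sum _ fun j _ => integrable_finset_sum _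
      fun k _ => l2_mul_int (hcomb2 i j) (hcomb2 i k)]
    refine Finset.sum_congr rfl fun j _ => ?_
    rw [integral_finset_sum _ fun k _ => l2_mul_int (hcomb2 i j) (hcomb2 i k)]
    refine Finset.sum_congr rfl fun k _ => ?_
    rw [integral_comb (ha2 j) (hb2 j) (ha2 k) (hb2 k)]
    try rw [IAA]
    try rw [IBB]
    try rw [IBA]
    try simp only [hT]
    try ring
  -- triple sum computation
  have core : ∑ i, ∑ j, ∑ k, (Y i j * Y i k * (c * S1 j k) - Y i j * Y⁻¹ i k * T j k
      - Y⁻¹ i j * Y i k * T k j + Y⁻¹ i j * Y⁻¹ i k * (c * S2 j k))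
      = c * G.trace - (∑ j, T j j) - (∑ j, T j j) + c * G.trace := by
    have swap : ∑ i, ∑ j, ∑ k, (Y i j * Y i k * (c * S1 j k) - Y i j * Y⁻¹ i k * T j k
        - Y⁻¹ i j * Y i k * T k j + Y⁻¹ i j * Y⁻¹ i k * (c * S2 j k))
        = ∑ j, ∑ k, ∑ i, (Y i j * Y i k * (c * S1 j k) - Y i j * Y⁻¹ i k * T j k
        - Y⁻¹ i j * Y i k * T k j + Y⁻¹ i j * Y⁻¹ i k * (c * S2 j k)) := by
      rw [Finset.sum_comm]
      exact Finset.sum_congr rfl fun j _ => Finset.sum_comm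
    rw [swap]
    have inner : ∀ j k, ∑ i, (Y i j * Y i k * (c * S1 j k) - Y i j * Y⁻¹ i k * T j k
        - Y⁻¹ i j * Y i k * T k j + Y⁻¹ i j * Y⁻¹ i k * (c * S2 j k))
        = X j k * (c * S1 j k) - (1 : Matrix (Fin d) (Fin d) ℝ) j k * T j k
          - (1 : Matrix (Fin d) (Fin d) ℝ) j k * T k j + X⁻¹ j k * (c * S2 j k) := by
      intro j k
      rw [sum_four, ← Finset.sum_mul, ← Finset.sum_mul, ← Finset.sum_mul,
        ← Finset.sum_mul, hYY, hYW, hWY, hWW]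
    have inner2 : ∀ j, ∑ k, (X j k * (c * S1 j k)
          - (1 : Matrix (Fin d) (Fin d) ℝ) j k * T j k
          - (1 : Matrix (Fin d) (Fin d) ℝ) j k * T k j + X⁻¹ j k * (c * S2 j k))
        = (∑ k, X j k * (c * S1 j k)) - T j j - T j j + ∑ k, X⁻¹ j k * (c * S2 j k) := by
      intro j
      rw [sum_four]
      have e1 : ∑ k, (1 : Matrix (Fin d) (Fin d) ℝ) j k * T j k = T j j := by
        simp [Matrix.one_apply]
      have e2 : ∑ k, (1 : Matrix (Fin d) (Fin d) ℝ) j k * T k j = T j j := by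
        simp [Matrix.one_apply]
      rw [e1, e2]
    calc ∑ j, ∑ k, ∑ i, (Y i j * Y i k * (c * S1 j k) - Y i j * Y⁻¹ i k * T j k
        - Y⁻¹ i j * Y i k * T k j + Y⁻¹ i j * Y⁻¹ i k * (c * S2 j k))
        = ∑ j, ((∑ k, X j k * (c * S1 j k)) - T j j - T j j
            + ∑ k, X⁻¹ j k * (c * S2 j k)) := by
          refine Finset.sum_congr rfl fun j _ => ?_
          rw [show ∑ k, ∑ i, (Y i j * Y i k * (c * S1 j k) - Y i j * Y⁻¹ i k * T j k
            - Y⁻¹ i j * Y i k * T k j + Y⁻¹ i j * Y⁻¹ i k * (c * S2 j k))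
            = ∑ k, (X j k * (c * S1 j k) - (1 : Matrix (Fin d) (Fin d) ℝ) j k * T j k
              - (1 : Matrix (Fin d) (Fin d) ℝ) j k * T k j + X⁻¹ j k * (c * S2 j k))
            from Finset.sum_congr rfl fun k _ => inner j k]
          exact inner2 j
      _ = (∑ j, ∑ k, X j k * (c * S1 j k)) - (∑ j, T j j) - (∑ j, T j j)
            + ∑ j, ∑ k, X⁻¹ j k * (c * S2 j k) := sum_four _ _ _ _
      _ = c * G.trace - (∑ j, T j j) - (∑ j, T j j) + c * G.trace := by
          have p1 : ∀ j k, X j k * (c * S1 j k) = c * (X j k * S1 j k) :=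
            fun j k => by ring
          have p2 : ∀ j k, X⁻¹ j k * (c * S2 j k) = c * (X⁻¹ j k * S2 j k) :=
            fun j k => by ring
          simp_rw [p1, p2, ← Finset.mul_sum]
          rw [trace1, trace2]
  have hsqint : ∀ i, Integrable (fun z : (Fin d → ℝ) × (Fin d → ℝ) =>
      (∑ j, (Y i j * (z.1 j - m1 j) - Y⁻¹ i j * (z.2 j - m2 j)))^2) cpl :=
    fun i => (hP2 i).integrable_sq
  have hTtr : ∑ j, T j j ≤ c * G.trace := by
    rw [integral_finset_sum _ fun i _ => hsqint i] at hnn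
    simp_rw [hPi] at hnn
    rw [core] at hnn
    linarith
  -- final computation of the transport cost
  have hIsum : ∀ i, Integrable
      (fun z : (Fin d → ℝ) × (Fin d → ℝ) => (z.2 i - z.1 i)^2) cpl :=
    fun i => ((hB2 i).sub (hA2 i)).integrable_sq
  have hInt : Integrable
      (fun z : (Fin d → ℝ) × (Fin d → ℝ) => ∑ i, (z.2 i - z.1 i)^2) cpl :=
    integrable_finset_sum _ fun i _ => hIsum i
  have hval : ∫ z : (Fin d → ℝ) × (Fin d → ℝ), ∑ i, (z.2 i - z.1 i)^2 ∂cpl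
      = ∑ i, (c * S1 i i + c * S2 i i + c * (m2 i - m1 i)^2 - 2 * T i i) := by
    rw [integral_finset_sum _ fun i _ => hIsum i]
    refine Finset.sum_congr rfl fun i _ => ?_
    have e : (fun z : (Fin d → ℝ) × (Fin d → ℝ) => (z.2 i - z.1 i)^2)
        = fun z => (z.1 i - m1 i) * (z.1 i - m1 i) + (z.2 i - m2 i) * (z.2 i - m2 i)
          - 2 * ((z.1 i - m1 i) * (z.2 i - m2 i))
          + (2 * (m2 i - m1 i)) * (z.2 i - m2 i)
          - (2 * (m2 i - m1 i)) * (z.1 i - m1 i)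
          + (m2 i - m1 i)^2 := funext fun z => by ring
    have h1 : Integrable (fun z : (Fin d → ℝ) × (Fin d → ℝ) =>
        (z.1 i - m1 i) * (z.1 i - m1 i)) cpl := l2_mul_int (ha2 i) (ha2 i)
    have h2 : Integrable (fun z : (Fin d → ℝ) × (Fin d → ℝ) =>
        (z.2 i - m2 i) * (z.2 i - m2 i)) cpl := l2_mul_int (hb2 i) (hb2 i)
    have h3 : Integrable (fun z : (Fin d → ℝ) × (Fin d → ℝ) =>
        2 * ((z.1 i - m1 i) * (z.2 i - m2 i))) cpl :=
      (l2_mul_int (ha2 i) (hb2 i)).const_mul 2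
    have h4 : Integrable (fun z : (Fin d → ℝ) × (Fin d → ℝ) =>
        (2 * (m2 i - m1 i)) * (z.2 i - m2 i)) cpl :=
      ((hb2 i).integrable one_le_two).const_mul (2 * (m2 i - m1 i))
    have h5 : Integrable (fun z : (Fin d → ℝ) × (Fin d → ℝ) =>
        (2 * (m2 i - m1 i)) * (z.1 i - m1 i)) cpl :=
      ((ha2 i).integrable one_le_two).const_mul (2 * (m2 i - m1 i))
    have q1 : Integrable (fun z : (Fin d → ℝ) × (Fin d → ℝ) =>
        (z.1 i - m1 i) * (z.1 i - m1 i) + (z.2 i - m2 i) * (z.2 i - m2 i)) cpl := h1.add h2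
    have q2 : Integrable (fun z : (Fin d → ℝ) × (Fin d → ℝ) =>
        (z.1 i - m1 i) * (z.1 i - m1 i) + (z.2 i - m2 i) * (z.2 i - m2 i)
          - 2 * ((z.1 i - m1 i) * (z.2 i - m2 i))) cpl := q1.sub h3
    have q3 : Integrable (fun z : (Fin d → ℝ) × (Fin d → ℝ) =>
        (z.1 i - m1 i) * (z.1 i - m1 i) + (z.2 i - m2 i) * (z.2 i - m2 i)
          - 2 * ((z.1 i - m1 i) * (z.2 i - m2 i))
          + (2 * (m2 i - m1 i)) * (z.2 i - m2 i)) cpl := q2.add h4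
    have q4 : Integrable (fun z : (Fin d → ℝ) × (Fin d → ℝ) =>
        (z.1 i - m1 i) * (z.1 i - m1 i) + (z.2 i - m2 i) * (z.2 i - m2 i)
          - 2 * ((z.1 i - m1 i) * (z.2 i - m2 i))
          + (2 * (m2 i - m1 i)) * (z.2 i - m2 i)
          - (2 * (m2 i - m1 i)) * (z.1 i - m1 i)) cpl := q3.sub h5
    rw [e, integral_add q4 (integrable_const _), integral_sub q3 h5,
      integral_add q2 h4, integral_sub q1 h3, integral_add h1 h2,
      IAA i i, IBB i i]
    simp only [integral_const_mul]
    rw [IA i, IB i, integral_const, measureReal_def, hmassR, smul_eq_mul]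
    simp only [hT]
    ring
  have htarget : c * ((∑ i, (m2 i - m1 i)^2) + (S1 + S2 - (2:ℝ) • G).trace)
      ≤ ∫ z : (Fin d → ℝ) × (Fin d → ℝ), ∑ i, (z.2 i - z.1 i)^2 ∂cpl := by
    rw [hval]
    have htr : (S1 + S2 - (2:ℝ) • G).trace = S1.trace + S2.trace - 2 * G.trace := by
      rw [Matrix.trace_sub, Matrix.trace_add, Matrix.trace_smul, smul_eq_mul]
    rw [htr]
    have hsplit : ∑ i, (c * S1 i i + c * S2 i i + c * (m2 i - m1 i)^2 - 2 * T i i)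
        = c * S1.trace + c * S2.trace + c * (∑ i, (m2 i - m1 i)^2)
          - 2 * ∑ i, T i i := by
      rw [Finset.sum_sub_distrib, Finset.sum_add_distrib, Finset.sum_add_distrib]
      simp only [Matrix.trace, Matrix.diag, ← Finset.mul_sum]
    rw [hsplit]
    have expand : c * ((∑ i, (m2 i - m1 i)^2) + (S1.trace + S2.trace - 2 * G.trace))
        = c * S1.trace + c * S2.trace + c * (∑ i, (m2 i - m1 i)^2)
          - 2 * (c * G.trace) := by ring
    rw [expand]
    linarith
  calc ENNReal.ofReal (c * ((∑ i, (m2 i - m1 i) ^ 2) + (S1 + S2 - (2 : ℝ) • G).trace))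
      ≤ ENNReal.ofReal (∫ z : (Fin d → ℝ) × (Fin d → ℝ), ∑ i, (z.2 i - z.1 i)^2 ∂cpl) :=
        ENNReal.ofReal_le_ofReal htarget
    _ = ∫⁻ z, ENNReal.ofReal (∑ i, (z.2 i - z.1 i) ^ 2) ∂cpl :=
        ofReal_integral_eq_lintegral_ofReal hInt
          (Filter.Eventually.of_forall fun z => Finset.sum_nonneg fun i _ => sq_nonneg _)
end

section
/- Let Σ₁ ≻ 0 and Σ₂ ≻ 0 be d×d matrices, m₁, m₂ ∈ ℝ^d, and define the affine map T(x) = Σ₁^{-1/2}(Σ₁^{1/2}Σ₂Σ₁^{1/2})^{1/2}Σ₁^{-1/2}·x + (m₂ − Σ₁^{-1/2}(Σ₁^{1/2}Σ₂Σ₁^{1/2})^{1/2}Σ₁^{-1/2}·m₁). Then the pushforward of the Gaussian N(m₁,Σ₁) under T is N(m₂,Σ₂). -/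
open MeasureTheory Matrix Real

/-- Density of the Gaussian `N(m, S)` on `ℝ^d` (for `S ≻ 0`). -/
noncomputable def gaussPdf {d : ℕ} (m : Fin d → ℝ) (S : Matrix (Fin d) (Fin d) ℝ)
    (x : Fin d → ℝ) : ℝ :=
  (Real.sqrt ((2 * π) ^ d * S.det))⁻¹ *
    Real.exp (-(1 / 2) * ((x - m) ⬝ᵥ S⁻¹.mulVec (x - m)))

/-- The Gaussian probability measure `N(m, S)` on `ℝ^d`. -/
noncomputable def gaussMeasure {d : ℕ} (m : Fin d → ℝ) (S : Matrix (Fin d) (Fin d) ℝ) :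
    Measure (Fin d → ℝ) :=
  volume.withDensity fun x => ENNReal.ofReal (gaussPdf m S x)

lemma map_withDensity_equiv {α β : Type*} [MeasurableSpace α] [MeasurableSpace β]
    (e : α ≃ᵐ β) (μ : Measure α) (f : α → ENNReal) (hf : Measurable f) :
    (μ.withDensity f).map e = (μ.map e).withDensity (f ∘ e.symm) := by
  ext s hs
  rw [MeasurableEquiv.map_apply, withDensity_apply _ hs,
    withDensity_apply _ (e.measurable hs),
    setLIntegral_map hs (hf.comp e.symm.measurable) e.measurable]
  simp

lemma dot_mulVec {d : ℕ} (M : Matrix (Fin d) (Fin d) ℝ) (u w : Fin d → ℝ) :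
    M.mulVec u ⬝ᵥ w = u ⬝ᵥ Mᵀ.mulVec w := by
  rw [dotProduct_comm, dotProduct_mulVec, ← mulVec_transpose, dotProduct_comm]

lemma dot_mulVec_mulVec {d : ℕ} (M N : Matrix (Fin d) (Fin d) ℝ) (u v : Fin d → ℝ) :
    M.mulVec u ⬝ᵥ N.mulVec v = u ⬝ᵥ (Mᵀ * N).mulVec v := by
  rw [dot_mulVec, mulVec_mulVec]

/-- The pushforward of `N(m₁,Σ₁)` under the affine map
`T x + (m₂ − T m₁)` with `T = Σ₁^{-1/2}(Σ₁^{1/2}Σ₂Σ₁^{1/2})^{1/2}Σ₁^{-1/2}` is `N(m₂,Σ₂)`.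
Here `R` is the symmetric positive definite square root of `Σ₁` and `G` that of
`Σ₁^{1/2} Σ₂ Σ₁^{1/2}`, so that `T = R⁻¹ G R⁻¹`. -/
theorem gaussian_pushforward_affine {d : ℕ}
    (m1 m2 : Fin d → ℝ) (S1 S2 : Matrix (Fin d) (Fin d) ℝ)
    (hS1 : S1.PosDef) (hS2 : S2.PosDef)
    (R G : Matrix (Fin d) (Fin d) ℝ)
    (hR : R.PosDef) (hRR : R * R = S1)
    (hG : G.PosDef) (hGG : G * G = R * S2 * R) :
    Measure.map
        (fun x => (R⁻¹ * G * R⁻¹).mulVec x + (m2 - (R⁻¹ * G * R⁻¹).mulVec m1))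
        (gaussMeasure m1 S1)
      = gaussMeasure m2 S2 := by
  set A := R⁻¹ * G * R⁻¹ with hAdef
  set b := m2 - A.mulVec m1 with hb
  have hdR : IsUnit R.det := isUnit_iff_ne_zero.2 hR.det_pos.ne'
  have hdApos : 0 < A.det := by
    have : A.det = R.det⁻¹ * G.det * R.det⁻¹ := by
      simp [hAdef, det_mul, det_nonsing_inv]
    rw [this]
    have h1 := hR.det_pos
    have h2 := hG.det_pos
    positivity
  have hdA : IsUnit A.det := isUnit_iff_ne_zero.2 hdApos.ne'
  have hRT : Rᵀ = R := by
    have := hR.isHermitian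
    rwa [IsHermitian, conjTranspose_eq_transpose_of_trivial] at this
  have hGT : Gᵀ = G := by
    have := hG.isHermitian
    rwa [IsHermitian, conjTranspose_eq_transpose_of_trivial] at this
  have hAT : Aᵀ = A := by
    rw [hAdef, transpose_mul, transpose_mul, transpose_nonsing_inv, hRT, hGT,
      Matrix.mul_assoc]
  -- key algebraic identity : A * S1 * A = S2
  have hASA : A * S1 * A = S2 := by
    have : A * S1 * A = R⁻¹ * (G * G) * R⁻¹ := by
      rw [hAdef, ← hRR]
      rw [show R⁻¹ * G * R⁻¹ * (R * R) * (R⁻¹ * G * R⁻¹)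
          = R⁻¹ * G * ((R⁻¹ * R) * (R * R⁻¹)) * G * R⁻¹ by noncomm_ring]
      rw [nonsing_inv_mul R hdR, mul_nonsing_inv R hdR]
      noncomm_ring
    rw [this, hGG, show R⁻¹ * (R * S2 * R) * R⁻¹ = (R⁻¹ * R) * S2 * (R * R⁻¹) by
      noncomm_ring, nonsing_inv_mul R hdR, mul_nonsing_inv R hdR, Matrix.one_mul,
      Matrix.mul_one]
  have hS2inv : S2⁻¹ = A⁻¹ * S1⁻¹ * A⁻¹ := by
    rw [← hASA, Matrix.mul_inv_rev (A * S1) A, Matrix.mul_inv_rev A S1,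
      Matrix.mul_assoc]
  have hdet2 : S2.det = A.det ^ 2 * S1.det := by
    rw [← hASA, det_mul, det_mul]; ring
  -- the affine measurable equivalence
  have : Invertible A := A.invertibleOfIsUnitDet hdA
  let eL : (Fin d → ℝ) ≃ₗ[ℝ] (Fin d → ℝ) := A.toLinearEquiv' this
  let e : (Fin d → ℝ) ≃ᵐ (Fin d → ℝ) :=
    eL.toContinuousLinearEquiv.toHomeomorph.toMeasurableEquiv.trans
      (MeasurableEquiv.addRight b)
  have heL : ∀ x, eL x = A.mulVec x := by
    intro x
    have h1 : (eL : Module.End ℝ (Fin d → ℝ)) = Matrix.toLin' A :=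
      A.toLinearEquiv'_apply this
    calc eL x = (eL : Module.End ℝ (Fin d → ℝ)) x := rfl
      _ = Matrix.toLin' A x := by rw [h1]
      _ = A.mulVec x := Matrix.toLin'_apply _ _
  have he : ⇑e = fun x => A.mulVec x + b := by
    funext x
    show eL x + b = A.mulVec x + b
    rw [heL]
  have hesymm : ⇑e.symm = fun y => A⁻¹.mulVec (y - b) := by
    funext y
    show eL.symm (y - b) = _
    have : (eL.symm : (Fin d → ℝ) →ₗ[ℝ] (Fin d → ℝ)) = Matrix.toLin' (⅟ A) :=
      A.toLinearEquiv'_symm_apply this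
    calc eL.symm (y - b) = (eL.symm : (Fin d → ℝ) →ₗ[ℝ] (Fin d → ℝ)) (y - b) := rfl
      _ = Matrix.toLin' (⅟ A) (y - b) := by rw [this]
      _ = A⁻¹.mulVec (y - b) := by rw [Matrix.invOf_eq_nonsing_inv, Matrix.toLin'_apply]
  have hpdf_meas : ∀ (m : Fin d → ℝ) (S : Matrix (Fin d) (Fin d) ℝ),
      Measurable fun x => ENNReal.ofReal (gaussPdf m S x) := by
    intro m S
    apply Measurable.ennreal_ofReal
    apply Measurable.const_mul
    apply Real.measurable_exp.comp
    apply Measurable.const_mul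
    have hc : Continuous fun x : Fin d → ℝ => x - m :=
      continuous_id.sub continuous_const
    exact (hc.dotProduct ((continuous_const (y := S⁻¹)).matrix_mulVec hc)).measurable
  -- compute the pushforward of volume
  have hmapvol : Measure.map e volume
      = ENNReal.ofReal |A.det⁻¹| • (volume : Measure (Fin d → ℝ)) := by
    rw [he]
    have h1 : (fun x => A.mulVec x + b) = (fun y => y + b) ∘ A.mulVec := rfl
    rw [h1, ← Measure.map_map (measurable_add_const b)
      (by rw [show (A.mulVec : (Fin d → ℝ) → (Fin d → ℝ)) = ⇑(Matrix.toLin' A) by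
        funext x; rw [Matrix.toLin'_apply]]
          exact (Matrix.toLin' A).continuous_of_finiteDimensional.measurable)]
    rw [show (A.mulVec : (Fin d → ℝ) → (Fin d → ℝ)) = ⇑(Matrix.toLin' A) by
        funext x; rw [Matrix.toLin'_apply]]
    rw [Real.map_matrix_volume_pi_eq_smul_volume_pi hdApos.ne', Measure.map_smul,
      map_add_right_eq_self]
  -- main computation
  rw [gaussMeasure, ← he, map_withDensity_equiv e volume _ (hpdf_meas m1 S1), hmapvol,
    withDensity_smul_measure, ← withDensity_smul' _ _ ENNReal.ofReal_ne_top]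
  rw [gaussMeasure]
  congr 1
  funext y
  simp only [Pi.smul_apply, Function.comp_apply, hesymm, smul_eq_mul]
  rw [← ENNReal.ofReal_mul (abs_nonneg _)]
  congr 1
  -- pointwise density identity
  have hx : A⁻¹.mulVec (y - b) - m1 = A⁻¹.mulVec (y - m2) := by
    have : y - b = (y - m2) + A.mulVec m1 := by rw [hb]; abel
    rw [this, mulVec_add, mulVec_mulVec, nonsing_inv_mul A hdA, one_mulVec]
    abel
  rw [gaussPdf, gaussPdf, hx]
  have hquad : A⁻¹.mulVec (y - m2) ⬝ᵥ S1⁻¹.mulVec (A⁻¹.mulVec (y - m2))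
      = (y - m2) ⬝ᵥ S2⁻¹.mulVec (y - m2) := by
    rw [show S1⁻¹.mulVec (A⁻¹.mulVec (y - m2)) = (S1⁻¹ * A⁻¹).mulVec (y - m2) from
      mulVec_mulVec _ _ _, dot_mulVec_mulVec, hS2inv, transpose_nonsing_inv, hAT,
      Matrix.mul_assoc]
  rw [hquad]
  -- constants
  rw [← mul_assoc]
  congr 1
  have h2pi : (0:ℝ) < (2 * π) ^ d := by positivity
  rw [hdet2, abs_of_pos (inv_pos.2 hdApos)]
  rw [show (2 * π) ^ d * (A.det ^ 2 * S1.det) = (A.det)^2 * ((2 * π) ^ d * S1.det) by ring,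
    Real.sqrt_mul (sq_nonneg _), Real.sqrt_sq hdApos.le, mul_inv]
end
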